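/- For every integer N ≥ 2, a_{1,2}(N+1,x) = 3·(x)_2·(−1)^{N−1}·N!·H_{N,2}, where (x)_2 = x(x−1). -/

import Mathlib

open Finset

/-- Generalized harmonic numbers `H_{N,j}`: `H_{N,0} = 1`,
`H_{N,1} = 1 + 1/2 + ⋯ + 1/N`, and `H_{N,j} = ∑_{l=j}^{N} H_{l-1,j-1}/l` for `j ≥ 2`. -/
def genHarmonic : ℕ → ℕ → ℚ
  | _, 0 => 1
  | N, 1 => ∑ i ∈ Finset.range N, (1 : ℚ) / (i + 1)
  | N, (j+2) => ∑ l ∈ Finset.Icc (j+2) N, genHarmonic (l-1) (j+1) / l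
termination_by N j => j

/-- Falling factorial `(x)_n = x(x-1)⋯(x-n+1)`, with `(x)_0 = 1`. -/
noncomputable def fallingFactorial (x : ℝ) (n : ℕ) : ℝ := ∏ i ∈ Finset.range n, (x - i)

/-- The coefficients `a_{i,j}(N, x)` arising from repeated differentiation of the
λ-Changhee generating function: `a_{0,0}(N,x) = 0`, `a_{1,0}(1,x) = -1`, `a_{0,1}(1,x) = x`,
and for `N ≥ 1`, `i, j ≥ 0` with `1 ≤ i + j ≤ N + 1`,
`a_{i,j}(N+1,x) = -N·a_{i,j}(N,x) - i·a_{i-1,j}(N,x) + (x - j + 1)·a_{i,j-1}(N,x)`,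
with the convention that `a_{i,j}(N,x) = 0` whenever `i < 0`, `j < 0`, or `i + j > N`. -/
noncomputable def aCh : ℕ → ℤ → ℤ → ℝ → ℝ
  | 0, _, _, _ => 0
  | 1, i, j, x => if i = 1 ∧ j = 0 then -1 else if i = 0 ∧ j = 1 then x else 0
  | (N+2), i, j, x =>
      if 0 ≤ i ∧ 0 ≤ j ∧ 1 ≤ i + j ∧ i + j ≤ N + 2 then
        -(N+1 : ℝ) * aCh (N+1) i j x - (i : ℝ) * aCh (N+1) (i-1) j x
          + (x - (j : ℝ) + 1) * aCh (N+1) i (j-1) x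
      else 0
lemma aCh_rec (N : ℕ) (i j : ℤ) (x : ℝ) (h : 0 ≤ i ∧ 0 ≤ j ∧ 1 ≤ i + j ∧ i + j ≤ N + 2) :
    aCh (N+2) i j x = -(N+1 : ℝ) * aCh (N+1) i j x - (i : ℝ) * aCh (N+1) (i-1) j x
          + (x - (j : ℝ) + 1) * aCh (N+1) i (j-1) x := by
  rw [aCh, if_pos h]

lemma aCh_j_neg (N : ℕ) (i j : ℤ) (x : ℝ) (hj : j < 0) : aCh N i j x = 0 := by
  match N with
  | 0 => rfl
  | 1 => simp only [aCh]; rw [if_neg (by omega), if_neg (by omega)]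
  | (M+2) => rw [aCh, if_neg (by omega)]

lemma aCh_00 (N : ℕ) (x : ℝ) : aCh N 0 0 x = 0 := by
  match N with
  | 0 => rfl
  | 1 => simp only [aCh]; rw [if_neg (by omega), if_neg (by omega)]
  | (M+2) => rw [aCh, if_neg (by omega)]

lemma gh1_succ (N : ℕ) : genHarmonic (N+1) 1 = genHarmonic N 1 + 1/(N+1) := by
  rw [genHarmonic.eq_2, genHarmonic.eq_2, Finset.sum_range_succ]

lemma gh2_succ (N : ℕ) (h : 1 ≤ N) :
    genHarmonic (N+1) 2 = genHarmonic N 2 + genHarmonic N 1 / (N+1) := by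
  rw [genHarmonic.eq_3 (N+1) 0, genHarmonic.eq_3 N 0,
    Finset.sum_Icc_succ_top (by omega : 0+2 ≤ N+1)]
  norm_num

lemma aCh_sub_lits : ((1:ℤ)-1 = 0) ∧ ((2:ℤ)-1 = 1) ∧ ((0:ℤ)-1 = -1) := by decide

lemma aCh_10 (N : ℕ) (x : ℝ) : aCh (N+1) 1 0 x = (-1)^(N+1) * (Nat.factorial N : ℝ) := by
  induction N with
  | zero => simp [aCh]
  | succ n ih =>
      rw [show n+1+1 = n+2 by ring, aCh_rec n 1 0 x (by omega)]
      simp only [aCh_sub_lits.1, aCh_sub_lits.2.2]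
      rw [ih, aCh_00,
        aCh_j_neg _ _ _ _ (by omega : (-1:ℤ) < 0), Nat.factorial_succ]
      push_cast
      try ring

lemma aCh_01 (N : ℕ) (x : ℝ) : aCh (N+1) 0 1 x = (-1)^N * (Nat.factorial N : ℝ) * x := by
  induction N with
  | zero => simp [aCh]
  | succ n ih =>
      rw [show n+1+1 = n+2 by ring, aCh_rec n 0 1 x (by omega)]
      simp only [aCh_sub_lits.1, aCh_sub_lits.2.2]
      rw [ih, aCh_00, Nat.factorial_succ]
      push_cast
      try ring

lemma aCh_11 (N : ℕ) (hN : 1 ≤ N) (x : ℝ) :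
    aCh (N+1) 1 1 x = 2 * x * (-1)^N * (Nat.factorial N : ℝ) * (genHarmonic N 1 : ℝ) := by
  induction N with
  | zero => omega
  | succ n ih =>
      rw [show n+1+1 = n+2 by ring, aCh_rec n 1 1 x (by omega)]
      simp only [aCh_sub_lits.1]
      rw [aCh_01, aCh_10, Nat.factorial_succ, gh1_succ]
      rcases Nat.eq_zero_or_pos n with h0 | h0
      · subst h0
        rw [show aCh 1 1 1 x = 0 by
          simp only [aCh]; rw [if_neg (by omega), if_neg (by omega)]]
        norm_num [genHarmonic.eq_2]
        ring
      · rw [ih h0]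
        have hn : (n : ℝ) + 1 ≠ 0 := by positivity
        push_cast
        field_simp
        ring

lemma aCh_02 (N : ℕ) (hN : 1 ≤ N) (x : ℝ) :
    aCh (N+1) 0 2 x = x * (x-1) * (-1)^(N+1) * (Nat.factorial N : ℝ) * (genHarmonic N 1 : ℝ) := by
  induction N with
  | zero => omega
  | succ n ih =>
      rw [show n+1+1 = n+2 by ring, aCh_rec n 0 2 x (by omega)]
      simp only [aCh_sub_lits.2.2, aCh_sub_lits.2.1]
      rw [aCh_01, Nat.factorial_succ, gh1_succ]
      rcases Nat.eq_zero_or_pos n with h0 | h0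
      · subst h0
        rw [show aCh 1 0 2 x = 0 by
          simp only [aCh]; rw [if_neg (by omega), if_neg (by omega)]]
        norm_num [genHarmonic.eq_2]
        ring
      · rw [ih h0]
        have hn : (n : ℝ) + 1 ≠ 0 := by positivity
        push_cast
        field_simp
        ring

/-- For `N ≥ 2`, `a_{1,2}(N+1,x) = 3·(x)_2·(-1)^{N-1}·N!·H_{N,2}`. -/
theorem aCh_one_two (N : ℕ) (hN : 2 ≤ N) (x : ℝ) :
    aCh (N + 1) 1 2 x
      = 3 * fallingFactorial x 2 * (-1 : ℝ) ^ (N - 1) * (Nat.factorial N : ℝ) *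
          (genHarmonic N 2 : ℝ) := by
  have hff : fallingFactorial x 2 = x * (x - 1) := by
    simp [fallingFactorial, Finset.prod_range_succ]
  induction N with
  | zero => omega
  | succ n ih =>
      rcases Nat.lt_or_ge n 2 with hn2 | hn2
      · -- base case N = 2, i.e. n = 1
        have hn1 : n = 1 := by omega
        subst hn1
        rw [show (1:ℕ)+1+1 = 1+2 by rfl, aCh_rec 1 1 2 x (by omega)]
        simp only [aCh_sub_lits.1, aCh_sub_lits.2.1]
        rw [show aCh 2 1 2 x = 0 by show aCh (0+2) 1 2 x = 0; rw [aCh, if_neg (by omega)],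
          aCh_02 1 le_rfl, aCh_11 1 le_rfl, hff]
        rw [show genHarmonic 2 2 = 1/2 by
          rw [genHarmonic.eq_3 2 0]; norm_num [genHarmonic.eq_2]]
        norm_num [genHarmonic.eq_2, Nat.factorial]
        ring
      · rw [show n+1+1 = n+2 by ring, aCh_rec n 1 2 x (by omega)]
        simp only [aCh_sub_lits.1, aCh_sub_lits.2.1]
        rw [aCh_02 n (by omega), aCh_11 n (by omega), ih hn2, gh2_succ n (by omega), Nat.factorial_succ, hff]
        have hn : (n : ℝ) + 1 ≠ 0 := by positivity
        have h1 : n + 1 - 1 = n := by omega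
        have h2' : n - 1 + 1 = n := by omega
        rw [h1, show ((-1:ℝ))^n = (-1)^(n-1)*(-1) by rw [← pow_succ, h2']]
        rw [show ((-1:ℝ))^(n+1) = (-1)^(n-1) by
          rw [show n+1 = n-1+2 by omega, pow_add]; norm_num]
        push_cast
        field_simp
        ring
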